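/- The Carreau law μ(t) = k∞ + (k₀ − k∞)(1 + λt²)^((θ−2)/2), with constants k₀ > k∞ > 0, λ > 0 and θ ∈ (1,2], satisfies: there exist positive constants m, M such that m(t−s) ≤ μ(t)t − μ(s)s ≤ M(t−s) for all t ≥ s ≥ 0. -/

import Mathlib

lemma carreau_deriv (lam θ : ℝ) (hlam : 0 < lam) (t : ℝ) :
    HasDerivAt (fun t : ℝ => t * (1 + lam * t ^ 2) ^ ((θ - 2) / 2))
      ((1 + lam * t ^ 2) ^ ((θ - 2) / 2 - 1) * (1 + (θ - 1) * (lam * t ^ 2))) t := by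
  have hpos : (0:ℝ) < 1 + lam * t ^ 2 := by positivity
  have h1 : HasDerivAt (fun t : ℝ => 1 + lam * t ^ 2) (2 * lam * t) t := by
    have := ((hasDerivAt_pow 2 t).const_mul lam).const_add 1
    simpa [mul_comm, mul_assoc, mul_left_comm] using this
  have h2 := h1.rpow_const (p := (θ - 2) / 2) (Or.inl (ne_of_gt hpos))
  have h3 := (hasDerivAt_id t).mul h2
  refine h3.congr_deriv ?_
  have hsplit : (1 + lam * t ^ 2) ^ ((θ - 2) / 2)
      = (1 + lam * t ^ 2) ^ ((θ - 2) / 2 - 1) * (1 + lam * t ^ 2) := by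
    rw [← Real.rpow_add_one (ne_of_gt hpos)]
    ring_nf
  rw [hsplit]
  simp only [id_eq]
  ring

lemma carreau_D_nonneg (lam θ : ℝ) (hlam : 0 < lam) (hθ1 : 1 < θ) (t : ℝ) :
    0 ≤ (1 + lam * t ^ 2) ^ ((θ - 2) / 2 - 1) * (1 + (θ - 1) * (lam * t ^ 2)) := by
  have hpos : (0:ℝ) < 1 + lam * t ^ 2 := by positivity
  have h1 : (0:ℝ) < (1 + lam * t ^ 2) ^ ((θ - 2) / 2 - 1) := Real.rpow_pos_of_pos hpos _
  have h2 : (0:ℝ) ≤ lam * t ^ 2 := by positivity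
  have h3 : (0:ℝ) ≤ 1 + (θ - 1) * (lam * t ^ 2) := by nlinarith
  positivity

lemma carreau_D_le_one (lam θ : ℝ) (hlam : 0 < lam) (hθ1 : 1 < θ) (hθ2 : θ ≤ 2) (t : ℝ) :
    (1 + lam * t ^ 2) ^ ((θ - 2) / 2 - 1) * (1 + (θ - 1) * (lam * t ^ 2)) ≤ 1 := by
  have hpos : (0:ℝ) < 1 + lam * t ^ 2 := by positivity
  have h1 : (0:ℝ) < (1 + lam * t ^ 2) ^ ((θ - 2) / 2 - 1) := Real.rpow_pos_of_pos hpos _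
  have hle : 1 + (θ - 1) * (lam * t ^ 2) ≤ 1 + lam * t ^ 2 := by
    have h2 : (0:ℝ) ≤ lam * t ^ 2 := by positivity
    nlinarith
  calc (1 + lam * t ^ 2) ^ ((θ - 2) / 2 - 1) * (1 + (θ - 1) * (lam * t ^ 2))
      ≤ (1 + lam * t ^ 2) ^ ((θ - 2) / 2 - 1) * (1 + lam * t ^ 2) := by
        exact mul_le_mul_of_nonneg_left hle (le_of_lt h1)
    _ = (1 + lam * t ^ 2) ^ ((θ - 2) / 2) := by
        rw [← Real.rpow_add_one (ne_of_gt hpos)]; ring_nf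
    _ ≤ 1 := Real.rpow_le_one_of_one_le_of_nonpos (by nlinarith [sq_nonneg t]) (by linarith)

theorem stmt_3 (k₀ kinf lam θ : ℝ) (hk : kinf < k₀) (hkinf : 0 < kinf)
    (hlam : 0 < lam) (hθ1 : 1 < θ) (hθ2 : θ ≤ 2)
    (μ : ℝ → ℝ) (hμ : ∀ t : ℝ, μ t = kinf + (k₀ - kinf) * (1 + lam * t ^ 2) ^ ((θ - 2) / 2)) :
    ∃ m M : ℝ, 0 < m ∧ 0 < M ∧ ∀ s t : ℝ, 0 ≤ s → s ≤ t →
      m * (t - s) ≤ μ t * t - μ s * s ∧ μ t * t - μ s * s ≤ M * (t - s) := by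
  set f : ℝ → ℝ := fun t => t * (1 + lam * t ^ 2) ^ ((θ - 2) / 2) with hf
  have hmono : Monotone f := by
    apply monotone_of_deriv_nonneg
    · exact fun x => (carreau_deriv lam θ hlam x).differentiableAt
    · intro x
      rw [(carreau_deriv lam θ hlam x).deriv]
      exact carreau_D_nonneg lam θ hlam hθ1 x
  have hanti : Antitone (fun t => f t - t) := by
    apply antitone_of_deriv_nonpos
    · exact fun x => ((carreau_deriv lam θ hlam x).sub (hasDerivAt_id' x)).differentiableAt
    · intro x
      rw [show deriv (fun t => f t - t) x = _ from ((carreau_deriv lam θ hlam x).sub (hasDerivAt_id' x)).deriv]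
      have := carreau_D_le_one lam θ hlam hθ1 hθ2 x
      linarith
  refine ⟨kinf, k₀, hkinf, by linarith, fun s t hs hst => ?_⟩
  have hfs : f s ≤ f t := hmono hst
  have hlip : f t - f s ≤ t - s := by
    have := hanti hst
    simp only at this
    linarith
  have heq : μ t * t - μ s * s = kinf * (t - s) + (k₀ - kinf) * (f t - f s) := by
    rw [hμ t, hμ s]; simp only [hf]; ring
  constructor
  · rw [heq]; nlinarith
  · rw [heq]; nlinarith
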